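/- Let f(n, k) denote the number of words in [k]^n avoiding the pattern 212. Then for every integer k ≥ 0, the identity (∑_{n ≥ 0} f(n, k)·x^n) · (∏_{j=0}^{k-1} (1 + j·x²) - x·∑_{j=0}^{k-1} ∏_{0 ≤ i ≤ k-1, i ≠ j} (1 + i·x²)) = ∏_{j=0}^{k-1} (1 + j·x²) holds as an identity of formal power series over ℚ. -/

import Mathlib

open PowerSeries

/-- The `i`-th letter (1-based value in `{1,…,k}`) of a word `w ∈ [k]^n`,
with value `0` outside the word. -/
def letter {n k : ℕ} (w : Fin n → Fin k) (i : ℕ) : ℕ :=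
  if h : i < n then (w ⟨i, h⟩ : ℕ) + 1 else 0

/-- `w` avoids the pattern 212: there is no 0-based index `i` with `i + 2 < n`
such that `w i = w (i+2)` and `w (i+1) < w i`. -/
def Avoids212 {n k : ℕ} (w : Fin n → Fin k) : Prop :=
  ∀ i : ℕ, i + 2 < n →
    ¬ (letter w i = letter w (i + 2) ∧ letter w (i + 1) < letter w i)

/-- The number of words in `[k]^n` avoiding 212. -/
noncomputable def f (n k : ℕ) : ℕ := Nat.card {w : Fin n → Fin k // Avoids212 w}

lemma letter_lt {n k : ℕ} (w : Fin n → Fin k) (i : ℕ) (h : i < n) :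
    letter w i = (w ⟨i, h⟩ : ℕ) + 1 := by simp [letter, h]

lemma letter_ge {n k : ℕ} (w : Fin n → Fin k) (i : ℕ) (h : ¬ i < n) :
    letter w i = 0 := by simp [letter, h]

lemma letter_zero {n k : ℕ} (w : Fin (n+1) → Fin k) :
    letter w 0 = (w 0 : ℕ) + 1 := by
  rw [letter_lt _ 0 (Nat.succ_pos n), Fin.mk_zero]

lemma letter_cons_zero {n k : ℕ} (b : Fin k) (v : Fin n → Fin k) :
    letter (Fin.cons b v) 0 = (b : ℕ) + 1 := by
  rw [letter_lt _ 0 (Nat.succ_pos n)]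
  rfl

lemma letter_cons_succ {n k : ℕ} (b : Fin k) (v : Fin n → Fin k) (i : ℕ) :
    letter (Fin.cons b v) (i + 1) = letter v i := by
  by_cases h : i < n
  · rw [letter_lt _ _ (by omega : i + 1 < n + 1), letter_lt _ _ h]
    have : (⟨i + 1, by omega⟩ : Fin (n+1)) = Fin.succ ⟨i, h⟩ := rfl
    rw [this, Fin.cons_succ]
  · rw [letter_ge _ _ (by omega), letter_ge _ _ h]

lemma letter_tail {n k : ℕ} (v : Fin (n+1) → Fin k) (i : ℕ) :
    letter (Fin.tail v) i = letter v (i + 1) := by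
  conv_rhs => rw [← Fin.cons_self_tail v]
  rw [letter_cons_succ]

lemma avoids_cons {n k : ℕ} (b : Fin k) (v : Fin n → Fin k) :
    Avoids212 (Fin.cons b v) ↔
      Avoids212 v ∧ ¬ (letter v 1 = (b : ℕ) + 1 ∧ letter v 0 < (b : ℕ) + 1) := by
  constructor
  · intro h
    refine ⟨fun i hi => ?_, ?_⟩
    · have := h (i + 1) (by omega)
      simpa [letter_cons_succ] using this
    · by_cases hn : 2 < n + 1
      · have := h 0 (by omega)
        simpa [letter_cons_zero, letter_cons_succ, eq_comm] using this
      · rw [letter_ge v 1 (by omega)]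
        simp
  · rintro ⟨hv, h01⟩ i hi
    match i with
    | 0 => simpa [letter_cons_zero, letter_cons_succ, eq_comm] using h01
    | (i+1) =>
      have := hv i (by omega)
      simpa [letter_cons_succ] using this

lemma avoids_tail {n k : ℕ} (v : Fin (n+1) → Fin k) (h : Avoids212 v) :
    Avoids212 (Fin.tail v) := by
  rw [← Fin.cons_self_tail v] at h
  exact ((avoids_cons _ _).1 h).1
noncomputable def A (n k a : ℕ) : ℕ :=
  Nat.card {w : Fin n → Fin k // Avoids212 w ∧ letter w 0 = a}

lemma f_zero (k : ℕ) : f 0 k = 1 := by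
  have : ∀ w : Fin 0 → Fin k, Avoids212 w := by
    intro w i hi; omega
  haveI : Unique {w : Fin 0 → Fin k // Avoids212 w} :=
    ⟨⟨⟨fun i => i.elim0, this _⟩⟩, fun w => Subtype.ext (funext fun i => i.elim0)⟩
  exact Nat.card_unique

lemma A_zero (k j : ℕ) : A 0 k (j + 1) = 0 := by
  have : IsEmpty {w : Fin 0 → Fin k // Avoids212 w ∧ letter w 0 = j + 1} := by
    refine ⟨fun w => ?_⟩
    have := w.2.2
    rw [letter_ge _ _ (by omega)] at this
    omega
  simp [A, Nat.card_of_isEmpty]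

lemma A_one {k j : ℕ} (hj : j < k) : A 1 k (j + 1) = 1 := by
  have hav : ∀ w : Fin 1 → Fin k, Avoids212 w := fun w i hi => by omega
  haveI : Unique {w : Fin 1 → Fin k // Avoids212 w ∧ letter w 0 = j + 1} := by
    refine ⟨⟨⟨fun _ => ⟨j, hj⟩, hav _, by rw [letter_zero]⟩⟩, ?_⟩
    rintro ⟨w, -, hw⟩
    rw [letter_zero] at hw
    refine Subtype.ext (funext fun i => ?_)
    have hi : i = 0 := Subsingleton.elim _ _
    subst hi
    refine Fin.ext ?_
    show (w 0 : ℕ) = j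
    omega
  exact Nat.card_unique

lemma f_split (n k : ℕ) : f (n + 1) k = ∑ j ∈ Finset.range k, A (n + 1) k (j + 1) := by
  classical
  have e : {w : Fin (n+1) → Fin k // Avoids212 w} ≃
      Σ a : Fin k, {w : Fin (n+1) → Fin k // Avoids212 w ∧ letter w 0 = (a : ℕ) + 1} := by
    refine ⟨fun w => ⟨w.1 0, w.1, w.2, letter_zero _⟩,
      fun p => ⟨p.2.1, p.2.2.1⟩, fun w => rfl, ?_⟩
    rintro ⟨a, w, hw, h0⟩
    rw [letter_zero] at h0
    have ha : w 0 = a := Fin.ext (by omega)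
    subst ha
    rfl
  haveI := Fintype.ofFinite {w : Fin (n+1) → Fin k // Avoids212 w}
  haveI : ∀ a : Fin k, Fintype {w : Fin (n+1) → Fin k // Avoids212 w ∧ letter w 0 = (a:ℕ) + 1} :=
    fun a => Fintype.ofFinite {w : Fin (n+1) → Fin k // Avoids212 w ∧ letter w 0 = (a:ℕ) + 1}
  rw [f, Nat.card_congr e, Nat.card_eq_fintype_card, Fintype.card_sigma,
    Finset.sum_range fun j => A (n+1) k (j+1)]
  refine Finset.sum_congr rfl fun a _ => ?_
  rw [A]
  exact Nat.card_eq_fintype_card.symm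

lemma A_rec {k : ℕ} (n j : ℕ) (hj : j < k) :
    A (n + 2) k (j + 1) + j * A n k (j + 1) = f (n + 1) k := by
  classical
  have e : {w : Fin (n+2) → Fin k // Avoids212 w ∧ letter w 0 = j + 1} ⊕
      (Fin j × {w : Fin n → Fin k // Avoids212 w ∧ letter w 0 = j + 1}) ≃
      {v : Fin (n+1) → Fin k // Avoids212 v} := by
    refine ⟨?_, ?_, ?_, ?_⟩
    · rintro (⟨w, hw⟩ | ⟨b, w, hw⟩)
      · exact ⟨Fin.tail w, avoids_tail w hw.1⟩
      · refine ⟨Fin.cons (Fin.castLE hj.le b) w, (avoids_cons _ _).2 ⟨hw.1, ?_⟩⟩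
        rintro ⟨-, hlt⟩
        rw [hw.2, Fin.coe_castLE] at hlt
        have := b.2
        omega
    · rintro ⟨v, hv⟩
      by_cases h : letter v 1 = j + 1 ∧ letter v 0 < j + 1
      · refine Sum.inr ⟨⟨(v 0 : ℕ), ?_⟩, ⟨Fin.tail v, avoids_tail v hv, ?_⟩⟩
        · have := letter_zero v
          omega
        · rw [letter_tail]; exact h.1
      · exact Sum.inl ⟨Fin.cons ⟨j, hj⟩ v, (avoids_cons _ _).2 ⟨hv, h⟩, letter_cons_zero _ _⟩
    · rintro (⟨w, hw, h0⟩ | ⟨b, w, hw, h0⟩)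
      · have hcond : ¬ (letter (Fin.tail w) 1 = j + 1 ∧ letter (Fin.tail w) 0 < j + 1) := by
          rintro ⟨h1, h2⟩
          rw [letter_tail] at h1 h2
          by_cases hn : (0:ℕ) + 2 < n + 2
          · exact hw 0 hn ⟨by rw [h0, h1], by omega⟩
          · rw [letter_ge _ 2 (by omega)] at h1; omega
        simp only [dif_neg hcond]
        have hw0 : w 0 = ⟨j, hj⟩ := by
          rw [letter_zero] at h0
          refine Fin.ext ?_
          show (w 0 : ℕ) = j
          omega
        refine congrArg Sum.inl (Subtype.ext ?_)
        show Fin.cons ⟨j, hj⟩ (Fin.tail w) = w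
        rw [← hw0]
        exact Fin.cons_self_tail w
      · have hcond : letter (Fin.cons (Fin.castLE hj.le b) w) 1 = j + 1 ∧
            letter (Fin.cons (Fin.castLE hj.le b) w) 0 < j + 1 := by
          refine ⟨(letter_cons_succ _ w 0).trans h0, ?_⟩
          rw [letter_cons_zero, Fin.coe_castLE]
          have := b.2
          omega
        simp only [dif_pos hcond]
        refine congrArg Sum.inr (Prod.ext ?_ ?_)
        · exact Fin.ext (by simp)
        · refine Subtype.ext ?_
          simp [Fin.tail_cons]
    · rintro ⟨v, hv⟩
      by_cases h : letter v 1 = j + 1 ∧ letter v 0 < j + 1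
      · simp only [dif_pos h]
        refine Subtype.ext ?_
        refine Eq.trans ?_ (Fin.cons_self_tail v)
        congr 1
      · simp only [dif_neg h]
        refine Subtype.ext ?_
        simp [Fin.tail_cons]
  haveI := Fintype.ofFinite {w : Fin (n+2) → Fin k // Avoids212 w ∧ letter w 0 = j + 1}
  haveI := Fintype.ofFinite {w : Fin n → Fin k // Avoids212 w ∧ letter w 0 = j + 1}
  have := Nat.card_congr e
  rw [Nat.card_sum, Nat.card_prod, Nat.card_eq_fintype_card (α := Fin j), Fintype.card_fin] at this
  exact this

lemma Aps_mul {k : ℕ} (j : ℕ) (hj : j < k) :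
    (PowerSeries.mk fun n => (A n k (j+1) : ℚ)) * (1 + C (j:ℚ) * X ^ 2) =
      X * PowerSeries.mk fun n => (f n k : ℚ) := by
  have L : ∀ n, (coeff n) ((PowerSeries.mk fun n => (A n k (j+1) : ℚ)) *
      (1 + C (j:ℚ) * X ^ 2)) =
      (A n k (j+1) : ℚ) + (j:ℚ) * (if 2 ≤ n then (A (n-2) k (j+1) : ℚ) else 0) := by
    intro n
    rw [mul_add, mul_one, map_add, coeff_mk]
    congr 1
    rw [show (PowerSeries.mk fun n => (A n k (j+1):ℚ)) * (C (j:ℚ) * X^2) =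
        C (j:ℚ) * ((PowerSeries.mk fun n => (A n k (j+1):ℚ)) * X^2) by ring,
      coeff_C_mul, coeff_mul_X_pow']
    split <;> simp
  ext n
  rw [L]
  match n with
  | 0 => simp [A_zero]
  | 1 => rw [coeff_succ_X_mul, coeff_mk, A_one hj, f_zero]; norm_num
  | (n+2) =>
    rw [coeff_succ_X_mul, coeff_mk, if_pos (by omega : 2 ≤ n + 2)]
    have := A_rec (k := k) n j hj
    push_cast [← this]
    ring_nf

lemma mkF_eq (k : ℕ) : (PowerSeries.mk fun n => (f n k : ℚ)) =
    1 + ∑ j ∈ Finset.range k, PowerSeries.mk fun n => (A n k (j+1) : ℚ) := by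
  ext n
  rw [map_add, map_sum]
  match n with
  | 0 => simp [f_zero, A_zero]
  | (n+1) =>
    rw [coeff_mk, f_split n k]
    simp [coeff_mk, coeff_one]

theorem stmt16 (k : ℕ) :
    (PowerSeries.mk fun n => (f n k : ℚ)) *
        ((∏ j ∈ Finset.range k, (1 + C (j : ℚ) * X ^ 2)) -
          X * ∑ j ∈ Finset.range k,
            ∏ i ∈ (Finset.range k).erase j, (1 + C (i : ℚ) * X ^ 2)) =
      ∏ j ∈ Finset.range k, (1 + C (j : ℚ) * X ^ 2) := by
  set F := PowerSeries.mk fun n => (f n k : ℚ) with hF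
  set P := ∏ j ∈ Finset.range k, (1 + C (j : ℚ) * X ^ 2) with hPdef
  have h1 : F * (X * ∑ j ∈ Finset.range k,
      ∏ i ∈ (Finset.range k).erase j, (1 + C (i : ℚ) * X ^ 2)) = (F - 1) * P := by
    rw [Finset.mul_sum, Finset.mul_sum]
    have : ∀ j ∈ Finset.range k,
        F * (X * ∏ i ∈ (Finset.range k).erase j, (1 + C (i : ℚ) * X ^ 2)) =
        (PowerSeries.mk fun n => (A n k (j+1) : ℚ)) * P := by
      intro j hj
      rw [show F * (X * ∏ i ∈ (Finset.range k).erase j, (1 + C (i : ℚ) * X ^ 2)) =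
          (X * F) * ∏ i ∈ (Finset.range k).erase j, (1 + C (i : ℚ) * X ^ 2) by ring,
        ← Aps_mul j (Finset.mem_range.1 hj), mul_assoc, hPdef,
        Finset.mul_prod_erase (Finset.range k) (fun i => 1 + C (i:ℚ) * X ^ 2) hj]
    rw [Finset.sum_congr rfl this, ← Finset.sum_mul]
    congr 1
    rw [hF, mkF_eq k]
    ring
  rw [mul_sub, h1]
  ring
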